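/- arXiv:1003.2744 — 5 statements merged into one kernel-verified Lean document; each statement's English description precedes it below -/
import Mathlib

section
/- The map f(z) = (z - r²/z̄)/(1 - r²) maps the annulus A(r,1) = {z : r < |z| < 1} bijectively onto the punctured unit disk {w : 0 < |w| < 1}, for any 0 < r < 1. -/
lemma aux_key (r : ℝ) (z : ℂ) (hz : z ≠ 0) (hr2 : (1:ℝ) - r^2 ≠ 0) :
    (z - ((r:ℂ))^2 / (starRingEnd ℂ z)) / (1 - ((r:ℂ))^2)
    = (((‖z‖ ^ 2 - r ^ 2) / (‖z‖ ^ 2 * (1 - r ^ 2)) : ℝ) : ℂ) * z := by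
  have hc : (starRingEnd ℂ z) ≠ 0 := by simpa using hz
  have habs : ((‖z‖ : ℂ)) ^ 2 = z * starRingEnd ℂ z := by
    rw [Complex.mul_conj, ← Complex.sq_norm]
    push_cast; ring
  have habs0 : ‖z‖ ≠ 0 := by simpa using hz
  have h1r : (1 : ℂ) - (r:ℂ)^2 ≠ 0 := by
    have : ((1 - r^2 : ℝ) : ℂ) ≠ 0 := Complex.ofReal_ne_zero.mpr hr2
    push_cast at this; exact this
  have habs0' : ((‖z‖ : ℂ)) ≠ 0 := Complex.ofReal_ne_zero.mpr habs0
  push_cast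
  field_simp
  linear_combination (-((r:ℂ))^2) * habs

/-- The map `f(z) = (z - r²/z̄)/(1 - r²)` maps the annulus `A(r,1)` bijectively
onto the punctured unit disk, for `0 < r < 1`. -/
theorem stmt0 (r : ℝ) (hr : 0 < r) (hr1 : r < 1) :
    Set.BijOn (fun z : ℂ => (z - ((r : ℂ))^2 / (starRingEnd ℂ z)) / (1 - ((r : ℂ))^2))
      {z : ℂ | r < ‖z‖ ∧ ‖z‖ < 1}
      {w : ℂ | 0 < ‖w‖ ∧ ‖w‖ < 1} := by
  have hr2pos : (0:ℝ) < 1 - r^2 := by nlinarith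
  have hr2 : (1:ℝ) - r^2 ≠ 0 := ne_of_gt hr2pos
  refine ⟨?_, ?_, ?_⟩
  · -- MapsTo
    rintro z ⟨h1, h2⟩
    have ha : 0 < ‖z‖ := lt_trans hr h1
    have hz0 : z ≠ 0 := by simpa using ne_of_gt ha
    set a := ‖z‖ with hadef
    have hC : 0 < (a^2 - r^2) / (a^2 * (1 - r^2)) := by
      apply div_pos (by nlinarith) (by positivity)
    simp only [Set.mem_setOf_eq, aux_key r z hz0 hr2, norm_mul, Complex.norm_real, Real.norm_eq_abs,
      ← hadef, abs_of_pos hC]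
    constructor
    · positivity
    · rw [div_mul_eq_mul_div, div_lt_one (by positivity)]
      nlinarith [mul_pos (sub_pos.mpr h2) (by positivity : (0:ℝ) < a + r^2)]
  · -- InjOn
    rintro z1 ⟨h11, h12⟩ z2 ⟨h21, h22⟩ heq
    simp only [aux_key r z1 (by simpa using ne_of_gt (lt_trans hr h11)) hr2,
      aux_key r z2 (by simpa using ne_of_gt (lt_trans hr h21)) hr2] at heq
    set a1 := ‖z1‖ with ha1
    set a2 := ‖z2‖ with ha2
    have ha1p : 0 < a1 := lt_trans hr h11
    have ha2p : 0 < a2 := lt_trans hr h21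
    have hC1 : 0 < (a1^2 - r^2) / (a1^2 * (1 - r^2)) := by
      apply div_pos (by nlinarith) (by positivity)
    have hC2 : 0 < (a2^2 - r^2) / (a2^2 * (1 - r^2)) := by
      apply div_pos (by nlinarith) (by positivity)
    have habseq : (a1^2 - r^2) / (a1^2 * (1 - r^2)) * a1
        = (a2^2 - r^2) / (a2^2 * (1 - r^2)) * a2 := by
      have h := congrArg (‖·‖) heq
      rw [norm_mul, norm_mul, Complex.norm_real, Complex.norm_real, Real.norm_eq_abs, Real.norm_eq_abs,
        abs_of_pos hC1, abs_of_pos hC2, ← ha1, ← ha2] at h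
      exact h
    have haeq : a1 = a2 := by
      rw [div_mul_eq_mul_div, div_mul_eq_mul_div, div_eq_div_iff (by positivity)
        (by positivity)] at habseq
      have hfac : (a1 - a2) * (a1 * a2 + r^2) = 0 := by
        have h2 : a1 * a2 * (1 - r^2) * ((a1 - a2) * (a1 * a2 + r^2)) = 0 := by
          linear_combination habseq
        exact (mul_eq_zero.mp h2).resolve_left (by positivity : (0:ℝ) < a1 * a2 * (1 - r^2)).ne'
      rcases mul_eq_zero.mp hfac with h | h
      · linarith [sub_eq_zero.mp h]
      · nlinarith
    rw [haeq] at heq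
    exact mul_left_cancel₀ (Complex.ofReal_ne_zero.mpr (ne_of_gt (haeq ▸ hC1))) heq
  · -- SurjOn
    rintro w ⟨hw0, hw1⟩
    set m := ‖w‖ with hm
    set G : ℝ → ℝ := fun s => (s^2 - r^2) / (s * (1 - r^2)) with hG
    have hcont : ContinuousOn G (Set.Icc r 1) := by
      apply ContinuousOn.div (by fun_prop) (by fun_prop)
      rintro x ⟨hx1, hx2⟩
      have : 0 < x := lt_of_lt_of_le hr hx1
      positivity
    have hGr : G r = 0 := by simp [hG]
    have hG1 : G 1 = 1 := by rw [hG]; field_simp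
    have hmem : m ∈ Set.Ioo (G r) (G 1) := by rw [hGr, hG1]; exact ⟨hw0, hw1⟩
    obtain ⟨s, hs, hgs⟩ := intermediate_value_Ioo (le_of_lt hr1) hcont hmem
    obtain ⟨hs1, hs2⟩ := hs
    have hsp : 0 < s := lt_trans hr hs1
    have hmp : 0 < m := hw0
    have hw0' : w ≠ 0 := by
      intro h; rw [hm, h] at hw0; simp at hw0
    have habsz : ‖((s/m : ℝ) : ℂ) * w‖ = s := by
      rw [norm_mul, Complex.norm_real, Real.norm_eq_abs, abs_of_pos (by positivity)]
      field_simp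
      exact hm.symm
    have hz0 : ((s/m : ℝ) : ℂ) * w ≠ 0 :=
      mul_ne_zero (Complex.ofReal_ne_zero.mpr (by positivity)) hw0'
    refine ⟨((s/m : ℝ) : ℂ) * w, ?_, ?_⟩
    · simp only [Set.mem_setOf_eq, habsz]; exact ⟨hs1, hs2⟩
    · simp only [aux_key r _ hz0 hr2, habsz]
      rw [← mul_assoc, ← Complex.ofReal_mul]
      have : (s^2 - r^2) / (s^2 * (1 - r^2)) * (s/m) = 1 := by
        rw [hG] at hgs
        field_simp
        field_simp at hgs
        nlinarith [hgs]
      rw [this]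
      simp
end

section
/- For 0 < r < 1 and ρ satisfying ρ ≤ 2r/(1+r²), the map f(z) = ((rρ-1)/(r²-1))·z + ((r²-rρ)/(r²-1))·(1/z̄) maps the annulus {r < |z| < 1} onto the annulus {ρ < |w| < 1}, and f is harmonic (f_{z z̄} = 0). -/
/-- Wirtinger derivative `∂f/∂z`. -/
noncomputable def wdz (f : ℂ → ℂ) (z : ℂ) : ℂ :=
  (fderiv ℝ f z 1 - Complex.I * fderiv ℝ f z Complex.I) / 2

/-- Wirtinger derivative `∂f/∂z̄`. -/
noncomputable def wdzbar (f : ℂ → ℂ) (z : ℂ) : ℂ :=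
  (fderiv ℝ f z 1 + Complex.I * fderiv ℝ f z Complex.I) / 2

lemma nitsche_hasFDerivAt (a b ζ : ℂ) (hζ : ζ ≠ 0) :
    HasFDerivAt (fun z : ℂ => a * z + b * (starRingEnd ℂ z)⁻¹)
      ((((1 : ℂ →L[ℂ] ℂ).smulRight a).restrictScalars ℝ) +
        b • ((Complex.conjCLE : ℂ →L[ℝ] ℂ).comp
          (((1 : ℂ →L[ℂ] ℂ).smulRight (-(ζ^2)⁻¹)).restrictScalars ℝ))) ζ := by
  have h1 : HasFDerivAt (fun z : ℂ => a * z)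
      (((1 : ℂ →L[ℂ] ℂ).smulRight a).restrictScalars ℝ) ζ := by
    have h := (((hasDerivAt_id ζ).const_mul a).hasFDerivAt).restrictScalars ℝ
    simp only [id_eq, mul_one] at h
    exact h
  have h2 : HasFDerivAt (fun z : ℂ => z⁻¹)
      (((1 : ℂ →L[ℂ] ℂ).smulRight (-(ζ^2)⁻¹)).restrictScalars ℝ) ζ :=
    ((hasDerivAt_inv hζ).hasFDerivAt).restrictScalars ℝ
  have h3 : HasFDerivAt (fun z : ℂ => (starRingEnd ℂ z)⁻¹)
      ((Complex.conjCLE : ℂ →L[ℝ] ℂ).comp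
        (((1 : ℂ →L[ℂ] ℂ).smulRight (-(ζ^2)⁻¹)).restrictScalars ℝ)) ζ := by
    have h := ((Complex.conjCLE : ℂ →L[ℝ] ℂ).hasFDerivAt (x := ζ⁻¹)).comp ζ h2
    have heq : (fun z : ℂ => (starRingEnd ℂ z)⁻¹) = ⇑Complex.conjCLE ∘ Inv.inv := by
      funext z; simp [Function.comp, Complex.conjCLE_apply, map_inv₀]
    rw [heq]; exact h
  exact h1.add (h3.const_mul b)

lemma nitsche_wdz (a b ζ : ℂ) (hζ : ζ ≠ 0) :
    wdz (fun z : ℂ => a * z + b * (starRingEnd ℂ z)⁻¹) ζ = a := by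
  have h := (nitsche_hasFDerivAt a b ζ hζ).fderiv
  rw [wdz, h]
  simp [Complex.conjCLE_apply, map_mul, Complex.conj_I]
  ring_nf
  simp [Complex.I_sq]
  ring

lemma nitsche_form (a b : ℝ) (z : ℂ) (hz : z ≠ 0) :
    ((a : ℝ) : ℂ) * z + ((b : ℝ) : ℂ) * (starRingEnd ℂ z)⁻¹
      = (((a + b / ‖z‖^2 : ℝ)) : ℂ) * z := by
  have habs : ‖z‖ ≠ 0 := norm_ne_zero_iff.mpr hz
  have hinv : (starRingEnd ℂ z)⁻¹ = z * ((‖z‖^2 : ℝ) : ℂ)⁻¹ := by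
    rw [Complex.inv_def, Complex.normSq_conj, Complex.sq_norm]
    simp
  rw [hinv]
  have h2 : ((‖z‖^2 : ℝ) : ℂ) ≠ 0 := by
    simpa using pow_ne_zero 2 habs
  push_cast
  field_simp

/-- Nitsche's map `f(z) = ((rρ-1)/(r²-1)) z + ((r²-rρ)/(r²-1)) (1/z̄)` maps the annulus
`{r < |z| < 1}` onto `{ρ < |w| < 1}` and is Euclidean harmonic (`f_{z z̄} = 0`),
whenever `0 < ρ ≤ 2r/(1+r²)`. -/
theorem stmt1 (r ρ : ℝ) (hr : 0 < r) (hr1 : r < 1) (hρ : 0 < ρ)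
    (hn : ρ ≤ 2 * r / (1 + r^2))
    (f : ℂ → ℂ)
    (hf : f = fun z : ℂ =>
      (((r * ρ - 1) / (r^2 - 1) : ℝ) : ℂ) * z +
      (((r^2 - r * ρ) / (r^2 - 1) : ℝ) : ℂ) * (1 / starRingEnd ℂ z)) :
    f '' {z : ℂ | r < ‖z‖ ∧ ‖z‖ < 1} =
        {w : ℂ | ρ < ‖w‖ ∧ ‖w‖ < 1} ∧
    ∀ z ∈ {z : ℂ | r < ‖z‖ ∧ ‖z‖ < 1},
      wdzbar (fun ζ => wdz f ζ) z = 0 := by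
  set a : ℝ := (r * ρ - 1) / (r^2 - 1) with hadef
  set b : ℝ := (r^2 - r * ρ) / (r^2 - 1) with hbdef
  have hf' : f = fun z : ℂ => ((a : ℝ) : ℂ) * z + ((b : ℝ) : ℂ) * (starRingEnd ℂ z)⁻¹ := by
    rw [hf]; funext z; rw [one_div]
  have hden : (0:ℝ) < 1 - r^2 := by nlinarith
  have hden' : r^2 - 1 ≠ 0 := by nlinarith
  have hr2 : (0:ℝ) < 1 + r^2 := by positivity
  rw [le_div_iff₀ hr2] at hn
  have hrρ : r * ρ < 1 := by nlinarith
  have ha : 0 < a := div_pos_of_neg_of_neg (by nlinarith) (by nlinarith)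
  have hsum : a + b = 1 := by rw [hadef, hbdef]; field_simp; ring
  have hgr : a * r^2 + b = r * ρ := by rw [hadef, hbdef]; field_simp; ring
  have hkey : ρ ≤ 2 * a * r := by
    have h1 : 2 * a * r - ρ = (2*r - ρ*(1+r^2)) / (1 - r^2) := by
      rw [hadef]; field_simp; ring
    have h2 : 0 ≤ (2*r - ρ*(1+r^2)) / (1 - r^2) :=
      div_nonneg (by linarith) hden.le
    linarith [h1 ▸ h2]
  clear_value a b
  clear hadef hbdef hf
  constructor
  · ext w
    simp only [Set.mem_image, Set.mem_setOf_eq]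
    constructor
    · rintro ⟨z, ⟨hz1, hz2⟩, rfl⟩
      have hz0 : z ≠ 0 := by
        intro h; rw [h] at hz1; simp at hz1; linarith
      set s := ‖z‖ with hs
      have hs0 : 0 < s := lt_trans hr hz1
      have hineq1 : ρ * s < a * s^2 + b := by
        nlinarith [mul_pos ha (mul_pos (sub_pos.2 hz1) (sub_pos.2 hz1)),
          mul_nonneg (sub_pos.2 hz1).le (sub_nonneg.2 hkey)]
      have hineq2 : a * s^2 + b < s := by
        nlinarith [mul_pos (sub_pos.2 hz2) (mul_pos ha (show (0:ℝ) < s - r^2 by nlinarith)),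
          mul_nonneg (mul_nonneg (sub_pos.2 hz2).le hr.le) (sub_nonneg.2 hkey)]
      have hcs : (a + b / s^2) * s = (a * s^2 + b) / s := by
        field_simp
      have hcpos : 0 < a + b / s^2 := by
        have h' : 0 < (a * s^2 + b) / s := div_pos (by nlinarith) hs0
        nlinarith [hcs]
      rw [hf']
      simp only []
      rw [nitsche_form a b z hz0, norm_mul, Complex.norm_real, Real.norm_eq_abs, ← hs,
        abs_of_pos hcpos, hcs]
      constructor
      · rw [lt_div_iff₀ hs0]; linarith
      · rw [div_lt_iff₀ hs0]; linarith
    · rintro ⟨hw1, hw2⟩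
      set t := ‖w‖ with htdef
      clear_value t
      have ht0 : 0 < t := lt_trans hρ hw1
      have hw0 : w ≠ 0 := by
        intro h; apply ht0.ne'; rw [htdef, h, norm_zero]
      have hg : ContinuousOn (fun s : ℝ => a*s + b/s) (Set.Icc r 1) := by
        apply ContinuousOn.add (Continuous.continuousOn (by continuity))
        exact ContinuousOn.div continuousOn_const continuousOn_id
          fun x hx => (lt_of_lt_of_le hr hx.1).ne'
      have hgrv : a*r + b/r = ρ := by
        have h1 : a*r + b/r = (a*r^2 + b)/r := by field_simp
        rw [h1, hgr, mul_comm r ρ, mul_div_assoc, div_self hr.ne', mul_one]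
      have hg1 : a*1 + b/1 = 1 := by rw [mul_one, div_one]; exact hsum
      have ht : t ∈ Set.Icc ((fun s : ℝ => a*s + b/s) r) ((fun s : ℝ => a*s + b/s) 1) := by
        simp only
        rw [hgrv, hg1]
        exact ⟨hw1.le, hw2.le⟩
      obtain ⟨s, hsmem, hgs⟩ := intermediate_value_Icc hr1.le hg ht
      simp only at hgs
      have hs_r : r < s := by
        rcases lt_or_eq_of_le hsmem.1 with h | h
        · exact h
        · exfalso; rw [← h] at hgs; rw [hgrv] at hgs; linarith
      have hs_1 : s < 1 := by
        rcases lt_or_eq_of_le hsmem.2 with h | h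
        · exact h
        · exfalso; rw [h] at hgs; rw [hg1] at hgs; linarith
      have hs0 : 0 < s := lt_trans hr hs_r
      have hst : (0:ℝ) < s / t := div_pos hs0 ht0
      refine ⟨((s/t : ℝ) : ℂ) * w, ⟨?_, ?_⟩, ?_⟩
      · rw [norm_mul, Complex.norm_real, Real.norm_eq_abs, abs_of_pos hst, ← htdef,
          div_mul_cancel₀ _ ht0.ne']
        exact hs_r
      · rw [norm_mul, Complex.norm_real, Real.norm_eq_abs, abs_of_pos hst, ← htdef,
          div_mul_cancel₀ _ ht0.ne']
        exact hs_1
      · have hz0 : ((s/t : ℝ) : ℂ) * w ≠ 0 :=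
          mul_ne_zero (Complex.ofReal_ne_zero.mpr hst.ne') hw0
        rw [hf']
        simp only []
        rw [nitsche_form a b _ hz0]
        have habs : ‖((s/t : ℝ) : ℂ) * w‖ = s := by
          rw [norm_mul, Complex.norm_real, Real.norm_eq_abs, abs_of_pos hst, ← htdef,
            div_mul_cancel₀ _ ht0.ne']
        rw [habs]
        have hmul : (a + b / s^2) * (s/t) = 1 := by
          have h1 : a * s^2 + b = t * s := by
            field_simp [hs0.ne'] at hgs
            linarith [hgs]
          field_simp
          linear_combination h1
        rw [← mul_assoc, ← Complex.ofReal_mul, hmul, Complex.ofReal_one, one_mul]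
  · intro z hz
    simp only [Set.mem_setOf_eq] at hz
    have hz0 : z ≠ 0 := by
      intro h; rw [h] at hz; simp at hz; linarith
    have hev : (fun ζ => wdz f ζ) =ᶠ[nhds z] fun _ => ((a : ℝ) : ℂ) := by
      filter_upwards [compl_singleton_mem_nhds hz0] with ζ hζ
      rw [hf']
      exact nitsche_wdz _ _ ζ hζ
    have h0 : fderiv ℝ (fun ζ => wdz f ζ) z = 0 := by
      rw [hev.fderiv_eq]; exact fderiv_const_apply _
    rw [wdzbar, h0]
    simp
end

section
/- Each map f(z) = ((rρ-1)/(r²-1))·z + ((r²-rρ)/(r²-1))·(1/z̄), with 0 < ρ ≤ 2r/(1+r²) < 1, is injective on the annulus {r < |z| < 1}. -/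
/-- Each Nitsche map `f(z) = ((rρ-1)/(r²-1)) z + ((r²-rρ)/(r²-1)) (1/z̄)` with
`0 < ρ ≤ 2r/(1+r²) < 1` is injective on the annulus `{r < |z| < 1}`. -/
theorem stmt2 (r ρ : ℝ) (hr : 0 < r) (hr1 : r < 1) (hρ : 0 < ρ)
    (hn : ρ ≤ 2 * r / (1 + r^2)) (hn1 : 2 * r / (1 + r^2) < 1) :
    Set.InjOn (fun z : ℂ =>
      (((r * ρ - 1) / (r^2 - 1) : ℝ) : ℂ) * z +
      (((r^2 - r * ρ) / (r^2 - 1) : ℝ) : ℂ) * (1 / starRingEnd ℂ z))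
      {z : ℂ | r < ‖z‖ ∧ ‖z‖ < 1} := by
  have hρ1 : ρ < 1 := lt_of_le_of_lt hn hn1
  set a : ℝ := (r * ρ - 1) / (r^2 - 1) with ha_def
  set b : ℝ := (r^2 - r * ρ) / (r^2 - 1) with hb_def
  have hD : r^2 - 1 < 0 := by nlinarith
  have hD' : r^2 - 1 ≠ 0 := ne_of_lt hD
  have ha : 0 < a := div_pos_of_neg_of_neg (by nlinarith) hD
  have h1 : ρ * (1 + r^2) ≤ 2 * r := (le_div_iff₀ (by positivity)).mp hn
  have hkey : 0 ≤ a * r^2 - b := by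
    have h2 : a * r^2 - b = (r*ρ*(1+r^2) - 2*r^2)/(r^2-1) := by
      rw [ha_def, hb_def]; field_simp; ring
    rw [h2, div_nonneg_iff]
    right
    exact ⟨by nlinarith, le_of_lt hD⟩
  have hgr : a * r^2 + b = ρ * r := by
    rw [ha_def, hb_def]; field_simp; ring
  have hform : ∀ u : ℂ, u ≠ 0 →
      ((a:ℂ) * u + (b:ℂ) * (1 / starRingEnd ℂ u)) =
        ((a + b/(‖u‖)^2 : ℝ) : ℂ) * u := by
    intro u hu
    have hcu : starRingEnd ℂ u ≠ 0 := by simpa using hu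
    have hau : ‖u‖ ≠ 0 := norm_ne_zero_iff.mpr hu
    have habs : ((‖u‖ : ℝ) : ℂ)^2 = u * starRingEnd ℂ u := by
      norm_cast
      rw [Complex.sq_norm]
      exact_mod_cast (Complex.mul_conj u).symm
    have h6 : (1 / starRingEnd ℂ u) = u / ((‖u‖ : ℂ))^2 := by
      rw [habs, eq_div_iff (mul_ne_zero hu hcu)]
      field_simp
    rw [h6]
    push_cast
    ring
  intro z hz w hw hfw
  obtain ⟨hz1, hz2⟩ := hz
  obtain ⟨hw1, hw2⟩ := hw
  have hs0 : 0 < ‖z‖ := lt_trans hr hz1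
  have ht0 : 0 < ‖w‖ := lt_trans hr hw1
  have hz0 : z ≠ 0 := norm_pos_iff.mp hs0
  have hw0 : w ≠ 0 := norm_pos_iff.mp ht0
  simp only at hfw
  rw [hform z hz0, hform w hw0] at hfw
  set s := ‖z‖ with hs_def
  set t := ‖w‖ with ht_def
  have hcz : 0 < a + b/s^2 := by
    have h3 : 0 < a * s^2 + b := by
      nlinarith [mul_pos ha (mul_pos (sub_pos.mpr hz1) (show (0:ℝ) < s + r by positivity)),
        mul_pos hρ hr]
    have h4 : a + b/s^2 = (a * s^2 + b)/s^2 := by field_simp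
    rw [h4]; positivity
  have hcw : 0 < a + b/t^2 := by
    have h3 : 0 < a * t^2 + b := by
      nlinarith [mul_pos ha (mul_pos (sub_pos.mpr hw1) (show (0:ℝ) < t + r by positivity)),
        mul_pos hρ hr]
    have h4 : a + b/t^2 = (a * t^2 + b)/t^2 := by field_simp
    rw [h4]; positivity
  have habs_eq : (a + b/s^2) * s = (a + b/t^2) * t := by
    have h5 := congrArg (‖·‖) hfw
    rw [norm_mul, norm_mul, Complex.norm_real, Complex.norm_real, Real.norm_eq_abs, Real.norm_eq_abs,
      abs_of_pos hcz, abs_of_pos hcw] at h5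
    exact h5
  have hst : s = t := by
    have hs' : s ≠ 0 := hs0.ne'
    have ht' : t ≠ 0 := ht0.ne'
    field_simp at habs_eq
    have key : s * t * ((s - t) * (a*s*t - b)) = 0 := by linear_combination (s * t) * habs_eq
    have key' : (s - t) * (a*s*t - b) = 0 :=
      (mul_eq_zero.mp key).resolve_left (mul_ne_zero hs' ht')
    have hpos : 0 < a*s*t - b := by
      nlinarith [mul_pos ha (mul_pos (sub_pos.mpr hz1) (sub_pos.mpr hw1)),
        mul_pos ha (mul_pos hr (sub_pos.mpr hz1)),
        mul_pos ha (mul_pos hr (sub_pos.mpr hw1))]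
    rcases mul_eq_zero.mp key' with h | h
    · linarith
    · exact absurd h (ne_of_gt hpos)
  rw [hst] at hfw
  exact mul_left_cancel₀ (by exact_mod_cast hcw.ne') hfw
end

section
/- Suppose w(z) = g(ρ(z))e^{iΘ(z)} is a harmonic map (with respect to the radial metric h(|w|²)|dw|²) where ρ is the geodesic distance of w(z) from 0 and g is the inverse of s ↦ ∫₀^s h(t²)dt. Then ρ satisfies Δρ = g(ρ)·h(g(ρ)²)·(1 + 2·(h'(g(ρ)²)/h(g(ρ)²))·g(ρ)²)·|∇Θ|². -/
/-- Euclidean Laplacian of a real function on `ℂ`. -/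
noncomputable def lap (f : ℂ → ℝ) (z : ℂ) : ℝ :=
  fderiv ℝ (fun w => fderiv ℝ f w 1) z 1 +
  fderiv ℝ (fun w => fderiv ℝ f w Complex.I) z Complex.I

/-- Squared gradient of a real function on `ℂ`. -/
noncomputable def gradsq (f : ℂ → ℝ) (z : ℂ) : ℝ :=
  (fderiv ℝ f z 1)^2 + (fderiv ℝ f z Complex.I)^2

open Complex in
lemma contDiff_one_fderiv_apply (f : ℂ → ℝ) (hf : ContDiff ℝ 2 f) (v : ℂ) :
    ContDiff ℝ 1 (fun ζ => fderiv ℝ f ζ v) :=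
  (hf.fderiv_right (m := 1) (by norm_num)).clm_apply contDiff_const

lemma second_symm (f : ℂ → ℝ) (hf : ContDiff ℝ 2 f) (z u v : ℂ) :
    fderiv ℝ (fun ζ => fderiv ℝ f ζ v) z u = fderiv ℝ (fun ζ => fderiv ℝ f ζ u) z v := by
  have hs := (hf.contDiffAt (x := z)).isSymmSndFDerivAt (by simp)
  have hd : DifferentiableAt ℝ (fderiv ℝ f) z :=
    (((hf.fderiv_right (m := 1) (by norm_num)).differentiable (by norm_num))).differentiableAt
  rw [fderiv_clm_apply hd (differentiableAt_const v), fderiv_clm_apply hd (differentiableAt_const u)]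
  simp [hs.eq u v]

/-- derivative of `R·e^{iΘ}` -/
lemma fderiv_RE (R Θ : ℂ → ℝ) (hR : Differentiable ℝ R) (hΘ : Differentiable ℝ Θ) (ζ v : ℂ) :
    fderiv ℝ (fun ζ => ((R ζ : ℝ) : ℂ) * Complex.exp (Complex.I * ((Θ ζ : ℝ) : ℂ))) ζ v
      = (((fderiv ℝ R ζ v : ℝ) : ℂ) +
          ((R ζ : ℝ) : ℂ) * Complex.I * ((fderiv ℝ Θ ζ v : ℝ) : ℂ)) *
          Complex.exp (Complex.I * ((Θ ζ : ℝ) : ℂ)) := by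
  have hRc : HasFDerivAt (fun ζ => ((R ζ : ℝ) : ℂ))
      (Complex.ofRealCLM.comp (fderiv ℝ R ζ)) ζ :=
    Complex.ofRealCLM.hasFDerivAt.comp ζ (hR ζ).hasFDerivAt
  have hTc : HasFDerivAt (fun ζ => ((Θ ζ : ℝ) : ℂ))
      (Complex.ofRealCLM.comp (fderiv ℝ Θ ζ)) ζ :=
    Complex.ofRealCLM.hasFDerivAt.comp ζ (hΘ ζ).hasFDerivAt
  have hE : HasFDerivAt (fun ζ => Complex.exp (Complex.I * ((Θ ζ : ℝ) : ℂ)))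
      (Complex.exp (Complex.I * ((Θ ζ : ℝ) : ℂ)) •
        (Complex.I • (Complex.ofRealCLM.comp (fderiv ℝ Θ ζ)))) ζ :=
    (hTc.const_mul Complex.I).cexp
  have : fderiv ℝ (fun ζ => ((R ζ : ℝ) : ℂ) * Complex.exp (Complex.I * ((Θ ζ : ℝ) : ℂ))) ζ = _ := (hRc.mul hE).fderiv
  rw [this]
  simp [ContinuousLinearMap.smul_apply, smul_eq_mul]
  ring

lemma key (R Θ : ℂ → ℝ) (hR : ContDiff ℝ 2 R) (hΘ : ContDiff ℝ 2 Θ) (c : ℝ) (z : ℂ)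
    (heq : wdzbar (fun ζ => wdz (fun ζ => ((R ζ : ℝ) : ℂ) *
        Complex.exp (Complex.I * ((Θ ζ : ℝ) : ℂ))) ζ) z +
      ((c : ℝ) : ℂ) * (starRingEnd ℂ (((R z : ℝ) : ℂ) * Complex.exp (Complex.I * ((Θ z : ℝ) : ℂ)))) *
        wdz (fun ζ => ((R ζ : ℝ) : ℂ) * Complex.exp (Complex.I * ((Θ ζ : ℝ) : ℂ))) z *
        wdzbar (fun ζ => ((R ζ : ℝ) : ℂ) * Complex.exp (Complex.I * ((Θ ζ : ℝ) : ℂ))) z = 0) :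
    lap R z + c * R z * gradsq R z - R z * gradsq Θ z - c * (R z)^3 * gradsq Θ z = 0 := by
  have hRd : Differentiable ℝ R := hR.differentiable two_ne_zero
  have hΘd : Differentiable ℝ Θ := hΘ.differentiable two_ne_zero
  -- first-order formulas for wdz, wdzbar of W
  have hwdz : ∀ ζ, wdz (fun ζ => ((R ζ : ℝ) : ℂ) * Complex.exp (Complex.I * ((Θ ζ : ℝ) : ℂ))) ζ =
      ((1/2 : ℂ) * (((fderiv ℝ R ζ 1 : ℝ) : ℂ) - Complex.I * ((fderiv ℝ R ζ Complex.I : ℝ) : ℂ) +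
        Complex.I * (((R ζ : ℝ) : ℂ) * (((fderiv ℝ Θ ζ 1 : ℝ) : ℂ) -
          Complex.I * ((fderiv ℝ Θ ζ Complex.I : ℝ) : ℂ))))) *
        Complex.exp (Complex.I * ((Θ ζ : ℝ) : ℂ)) := by
    intro ζ
    unfold wdz
    rw [fderiv_RE R Θ hRd hΘd ζ 1, fderiv_RE R Θ hRd hΘd ζ Complex.I]
    ring
  have hwdzbar : wdzbar (fun ζ => ((R ζ : ℝ) : ℂ) * Complex.exp (Complex.I * ((Θ ζ : ℝ) : ℂ))) z =
      ((1/2 : ℂ) * (((fderiv ℝ R z 1 : ℝ) : ℂ) + Complex.I * ((fderiv ℝ R z Complex.I : ℝ) : ℂ) +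
        Complex.I * (((R z : ℝ) : ℂ) * (((fderiv ℝ Θ z 1 : ℝ) : ℂ) +
          Complex.I * ((fderiv ℝ Θ z Complex.I : ℝ) : ℂ))))) *
        Complex.exp (Complex.I * ((Θ z : ℝ) : ℂ)) := by
    unfold wdzbar
    rw [fderiv_RE R Θ hRd hΘd z 1, fderiv_RE R Θ hRd hΘd z Complex.I]
    ring
  -- differentiability of the pieces at z
  have hf1d : DifferentiableAt ℝ (fun ζ => fderiv ℝ R ζ 1) z :=
    ((contDiff_one_fderiv_apply R hR 1).differentiable one_ne_zero) z
  have hf2d : DifferentiableAt ℝ (fun ζ => fderiv ℝ R ζ Complex.I) z :=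
    ((contDiff_one_fderiv_apply R hR Complex.I).differentiable one_ne_zero) z
  have hf3d : DifferentiableAt ℝ (fun ζ => fderiv ℝ Θ ζ 1) z :=
    ((contDiff_one_fderiv_apply Θ hΘ 1).differentiable one_ne_zero) z
  have hf4d : DifferentiableAt ℝ (fun ζ => fderiv ℝ Θ ζ Complex.I) z :=
    ((contDiff_one_fderiv_apply Θ hΘ Complex.I).differentiable one_ne_zero) z
  have hf1 : HasFDerivAt (fun ζ => ((fderiv ℝ R ζ 1 : ℝ) : ℂ))
      (Complex.ofRealCLM.comp (fderiv ℝ (fun ζ => fderiv ℝ R ζ 1) z)) z :=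
    Complex.ofRealCLM.hasFDerivAt.comp z hf1d.hasFDerivAt
  have hf2 : HasFDerivAt (fun ζ => ((fderiv ℝ R ζ Complex.I : ℝ) : ℂ))
      (Complex.ofRealCLM.comp (fderiv ℝ (fun ζ => fderiv ℝ R ζ Complex.I) z)) z :=
    Complex.ofRealCLM.hasFDerivAt.comp z hf2d.hasFDerivAt
  have hf3 : HasFDerivAt (fun ζ => ((fderiv ℝ Θ ζ 1 : ℝ) : ℂ))
      (Complex.ofRealCLM.comp (fderiv ℝ (fun ζ => fderiv ℝ Θ ζ 1) z)) z :=
    Complex.ofRealCLM.hasFDerivAt.comp z hf3d.hasFDerivAt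
  have hf4 : HasFDerivAt (fun ζ => ((fderiv ℝ Θ ζ Complex.I : ℝ) : ℂ))
      (Complex.ofRealCLM.comp (fderiv ℝ (fun ζ => fderiv ℝ Θ ζ Complex.I) z)) z :=
    Complex.ofRealCLM.hasFDerivAt.comp z hf4d.hasFDerivAt
  have hfR : HasFDerivAt (fun ζ => ((R ζ : ℝ) : ℂ))
      (Complex.ofRealCLM.comp (fderiv ℝ R z)) z :=
    Complex.ofRealCLM.hasFDerivAt.comp z (hRd z).hasFDerivAt
  have hfT : HasFDerivAt (fun ζ => ((Θ ζ : ℝ) : ℂ))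
      (Complex.ofRealCLM.comp (fderiv ℝ Θ z)) z :=
    Complex.ofRealCLM.hasFDerivAt.comp z (hΘd z).hasFDerivAt
  have hEz : HasFDerivAt (fun ζ => Complex.exp (Complex.I * ((Θ ζ : ℝ) : ℂ)))
      (Complex.exp (Complex.I * ((Θ z : ℝ) : ℂ)) •
        (Complex.I • (Complex.ofRealCLM.comp (fderiv ℝ Θ z)))) z :=
    (hfT.const_mul Complex.I).cexp
  have hAz := ((hf1.sub (hf2.const_mul Complex.I)).add
      ((hfR.mul (hf3.sub (hf4.const_mul Complex.I))).const_mul Complex.I)).const_mul ((1:ℂ)/2)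
  have hAEz : HasFDerivAt (fun ζ => ((1/2 : ℂ) * (((fderiv ℝ R ζ 1 : ℝ) : ℂ) - Complex.I * ((fderiv ℝ R ζ Complex.I : ℝ) : ℂ) + Complex.I * (((R ζ : ℝ) : ℂ) * (((fderiv ℝ Θ ζ 1 : ℝ) : ℂ) - Complex.I * ((fderiv ℝ Θ ζ Complex.I : ℝ) : ℂ))))) * Complex.exp (Complex.I * ((Θ ζ : ℝ) : ℂ))) _ z := hAz.mul hEz
  have hS : wdzbar (fun ζ => wdz (fun ζ => ((R ζ : ℝ) : ℂ) *
      Complex.exp (Complex.I * ((Θ ζ : ℝ) : ℂ))) ζ) z = (((((1/2 : ℂ) * (((fderiv ℝ R z 1 : ℝ) : ℂ) - Complex.I * ((fderiv ℝ R z Complex.I : ℝ) : ℂ) + Complex.I * (((R z : ℝ) : ℂ) * (((fderiv ℝ Θ z 1 : ℝ) : ℂ) - Complex.I * ((fderiv ℝ Θ z Complex.I : ℝ) : ℂ))))) * (Complex.I * ((fderiv ℝ Θ z 1 : ℝ) : ℂ)) + ((1/2 : ℂ) * (((fderiv ℝ (fun ζ => fderiv ℝ R ζ 1) z 1 : ℝ)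 : ℂ) - Complex.I * ((fderiv ℝ (fun ζ => fderiv ℝ R ζ Complex.I) z 1 : ℝ) : ℂ) + Complex.I * (((R z : ℝ) : ℂ) * (((fderiv ℝ (fun ζ => fderiv ℝ Θ ζ 1) z 1 : ℝ) : ℂ) - Complex.I * ((fderiv ℝ (fun ζ => fderiv ℝ Θ ζ Complex.I) z 1 : ℝ) : ℂ)) + (((fderiv ℝ Θ z 1 : ℝ) : ℂ) - Complex.I * ((fderiv ℝ Θ z Complex.I : ℝ) : ℂ)) * ((fderiv ℝ R z 1 : ℝ) : ℂ))))) + Complex.I * (((1/2 : ℂ) * (((fderiv ℝ R z 1 : ℝ) : ℂ) - Complex.I * ((fderiv ℝ R z Complex.I : ℝ) : ℂ) + Complex.I * (((R z : ℝ) : ℂ) * (((fderiv ℝ Θ z 1 : ℝ) : ℂ) - Complex.I * ((fderiv ℝ Θ z Complex.I : ℝ) : ℂ))))) * (Complex.I * ((fderiv ℝ Θ z Complex.I : ℝ) : ℂ)) + ((1/2 : ℂ) * (((fderiv ℝ (fun ζ => fderiv ℝ R ζ 1) z Complex.I : ℝ) : ℂ) - Complex.I * ((fderiv ℝ (fun ζ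 => fderiv ℝ R ζ Complex.I) z Complex.I : ℝ) : ℂ) + Complex.I * (((R z : ℝ) : ℂ) * (((fderiv ℝ (fun ζ => fderiv ℝ Θ ζ 1) z Complex.I : ℝ) : ℂ) - Complex.I * ((fderiv ℝ (fun ζ => fderiv ℝ Θ ζ Complex.I) z Complex.I : ℝ) : ℂ)) + (((fderiv ℝ Θ z 1 : ℝ) : ℂ) - Complex.I * ((fderiv ℝ Θ z Complex.I : ℝ) : ℂ)) * ((fderiv ℝ R z Complex.I : ℝ) : ℂ)))))) / 2) * Complex.exp (Complex.I * ((Θ z : ℝ) : ℂ)) := by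
    have h1 : (fun ζ => wdz (fun ζ => ((R ζ : ℝ) : ℂ) *
        Complex.exp (Complex.I * ((Θ ζ : ℝ) : ℂ))) ζ) = (fun ζ => ((1/2 : ℂ) * (((fderiv ℝ R ζ 1 : ℝ) : ℂ) - Complex.I * ((fderiv ℝ R ζ Complex.I : ℝ) : ℂ) + Complex.I * (((R ζ : ℝ) : ℂ) * (((fderiv ℝ Θ ζ 1 : ℝ) : ℂ) - Complex.I * ((fderiv ℝ Θ ζ Complex.I : ℝ) : ℂ))))) * Complex.exp (Complex.I * ((Θ ζ : ℝ) : ℂ))) :=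
      funext hwdz
    unfold wdzbar
    rw [h1, hAEz.fderiv]
    simp only [ContinuousLinearMap.add_apply, ContinuousLinearMap.smul_apply,
      ContinuousLinearMap.comp_apply, ContinuousLinearMap.sub_apply,
      Complex.ofRealCLM_apply, smul_eq_mul, Pi.add_apply, Pi.sub_apply, Pi.mul_apply]
    ring
  have hE0 : Complex.exp (Complex.I * ((Θ z : ℝ) : ℂ)) ≠ 0 := Complex.exp_ne_zero _
  have hmul : Complex.exp (Complex.I * ((-Θ z : ℝ) : ℂ)) * Complex.exp (Complex.I * ((Θ z : ℝ) : ℂ)) = 1 := by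
    rw [← Complex.exp_add]
    push_cast
    ring_nf
    exact Complex.exp_zero
  have hconj : (starRingEnd ℂ) (((R z : ℝ) : ℂ) * Complex.exp (Complex.I * ((Θ z : ℝ) : ℂ))) =
      ((R z : ℝ) : ℂ) * Complex.exp (Complex.I * ((-Θ z : ℝ) : ℂ)) := by
    rw [map_mul, ← Complex.exp_conj]
    simp [Complex.conj_ofReal, Complex.conj_I]
  rw [hS, hwdz z, hwdzbar, hconj] at heq
  have h5 : ((((((1/2 : ℂ) * (((fderiv ℝ R z 1 : ℝ) : ℂ) - Complex.I * ((fderiv ℝ R z Complex.I : ℝ) : ℂ) + Complex.I * (((R z : ℝ) : ℂ) * (((fderiv ℝ Θ z 1 : ℝ) : ℂ) - Complex.I * ((fderiv ℝ Θ z Complex.I : ℝ) : ℂ))))) * (Complex.I * ((fderiv ℝ Θ z 1 : ℝ) : ℂ)) + ((1/2 : ℂ) * (((fderiv ℝ (fun ζ => fderiv ℝ R ζ 1) z 1 : ℝ) : ℂ) - Complex.I * ((fderiv ℝ (fun ζ => fderiv ℝ R ζ Complex.I) z 1 : ℝ) : ℂ) + Complex.I * (((R z : ℝ) : ℂ) *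 (((fderiv ℝ (fun ζ => fderiv ℝ Θ ζ 1) z 1 : ℝ) : ℂ) - Complex.I * ((fderiv ℝ (fun ζ => fderiv ℝ Θ ζ Complex.I) z 1 : ℝ) : ℂ)) + (((fderiv ℝ Θ z 1 : ℝ) : ℂ) - Complex.I * ((fderiv ℝ Θ z Complex.I : ℝ) : ℂ)) * ((fderiv ℝ R z 1 : ℝ) : ℂ))))) + Complex.I * (((1/2 : ℂ) * (((fderiv ℝ R z 1 : ℝ) : ℂ) - Complex.I * ((fderiv ℝ R z Complex.I : ℝ) : ℂ) + Complex.I * (((R z : ℝ) : ℂ) * (((fderiv ℝ Θ z 1 : ℝ) : ℂ) - Complex.I * ((fderiv ℝ Θ z Complex.I : ℝ) : ℂ))))) * (Complex.I * ((fderiv ℝ Θ z Complex.I : ℝ) : ℂ)) + ((1/2 : ℂ) * (((fderiv ℝ (fun ζ => fderiv ℝ R ζ 1) z Complex.I : ℝ) : ℂ) - Complex.I * ((fderiv ℝ (fun ζ => fderiv ℝ R ζ Complex.I) z Complex.I : ℝ) : ℂ) + Complex.I * (((R z : ℝ) : ℂ) * (((fderiv ℝ (fun ζ => fderiv ℝ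 Θ ζ 1) z Complex.I : ℝ) : ℂ) - Complex.I * ((fderiv ℝ (fun ζ => fderiv ℝ Θ ζ Complex.I) z Complex.I : ℝ) : ℂ)) + (((fderiv ℝ Θ z 1 : ℝ) : ℂ) - Complex.I * ((fderiv ℝ Θ z Complex.I : ℝ) : ℂ)) * ((fderiv ℝ R z Complex.I : ℝ) : ℂ)))))) / 2) + ((c : ℝ) : ℂ) * ((R z : ℝ) : ℂ) * ((1/2 : ℂ) * (((fderiv ℝ R z 1 : ℝ) : ℂ) - Complex.I * ((fderiv ℝ R z Complex.I : ℝ) : ℂ) + Complex.I * (((R z : ℝ) : ℂ) * (((fderiv ℝ Θ z 1 : ℝ) : ℂ) - Complex.I * ((fderiv ℝ Θ z Complex.I : ℝ) : ℂ))))) * ((1/2 : ℂ) * (((fderiv ℝ R z 1 : ℝ) : ℂ) + Complex.I * ((fderiv ℝ R z Complex.I : ℝ) : ℂ) + Complex.I * (((R z : ℝ) : ℂ) * (((fderiv ℝ Θ z 1 : ℝ) : ℂ) + Complex.I * ((fderiv ℝ Θ z Complex.I : ℝ) : ℂ)))))) * Complex.exp (Complex.I * ((Θ z : ℝ) : ℂ))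 = 0 := by
    linear_combination heq - (((c : ℝ) : ℂ) * ((R z : ℝ) : ℂ) * ((1/2 : ℂ) * (((fderiv ℝ R z 1 : ℝ) : ℂ) - Complex.I * ((fderiv ℝ R z Complex.I : ℝ) : ℂ) + Complex.I * (((R z : ℝ) : ℂ) * (((fderiv ℝ Θ z 1 : ℝ) : ℂ) - Complex.I * ((fderiv ℝ Θ z Complex.I : ℝ) : ℂ))))) * ((1/2 : ℂ) * (((fderiv ℝ R z 1 : ℝ) : ℂ) + Complex.I * ((fderiv ℝ R z Complex.I : ℝ) : ℂ) + Complex.I * (((R z : ℝ) : ℂ) * (((fderiv ℝ Θ z 1 : ℝ) : ℂ) + Complex.I * ((fderiv ℝ Θ z Complex.I : ℝ) : ℂ))))) * Complex.exp (Complex.I * ((Θ z : ℝ) : ℂ))) * hmul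
  have h6 : (((((1/2 : ℂ) * (((fderiv ℝ R z 1 : ℝ) : ℂ) - Complex.I * ((fderiv ℝ R z Complex.I : ℝ) : ℂ) + Complex.I * (((R z : ℝ) : ℂ) * (((fderiv ℝ Θ z 1 : ℝ) : ℂ) - Complex.I * ((fderiv ℝ Θ z Complex.I : ℝ) : ℂ))))) * (Complex.I * ((fderiv ℝ Θ z 1 : ℝ) : ℂ)) + ((1/2 : ℂ) * (((fderiv ℝ (fun ζ => fderiv ℝ R ζ 1) z 1 : ℝ) : ℂ) - Complex.I * ((fderiv ℝ (fun ζ => fderiv ℝ R ζ Complex.I) z 1 : ℝ) : ℂ) + Complex.I * (((R z : ℝ) : ℂ) * (((fderiv ℝ (fun ζ => fderiv ℝ Θ ζ 1) z 1 : ℝ) : ℂ) - Complex.I * ((fderiv ℝ (fun ζ => fderiv ℝ Θ ζ Complex.I) z 1 : ℝ) : ℂ)) + (((fderiv ℝ Θ z 1 : ℝ) : ℂ) - Complex.I * ((fderiv ℝ Θ z Complex.I : ℝ) : ℂ)) * ((fderiv ℝ R z 1 : ℝ) : ℂ))))) + Complex.I * (((1/2 : ℂ) * (((fderiv ℝ R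 z 1 : ℝ) : ℂ) - Complex.I * ((fderiv ℝ R z Complex.I : ℝ) : ℂ) + Complex.I * (((R z : ℝ) : ℂ) * (((fderiv ℝ Θ z 1 : ℝ) : ℂ) - Complex.I * ((fderiv ℝ Θ z Complex.I : ℝ) : ℂ))))) * (Complex.I * ((fderiv ℝ Θ z Complex.I : ℝ) : ℂ)) + ((1/2 : ℂ) * (((fderiv ℝ (fun ζ => fderiv ℝ R ζ 1) z Complex.I : ℝ) : ℂ) - Complex.I * ((fderiv ℝ (fun ζ => fderiv ℝ R ζ Complex.I) z Complex.I : ℝ) : ℂ) + Complex.I * (((R z : ℝ) : ℂ) * (((fderiv ℝ (fun ζ => fderiv ℝ Θ ζ 1) z Complex.I : ℝ) : ℂ) - Complex.I * ((fderiv ℝ (fun ζ => fderiv ℝ Θ ζ Complex.I) z Complex.I : ℝ) : ℂ)) + (((fderiv ℝ Θ z 1 : ℝ) : ℂ) - Complex.I * ((fderiv ℝ Θ z Complex.I : ℝ) : ℂ)) * ((fderiv ℝ R z Complex.I : ℝ) : ℂ)))))) / 2) + ((c : ℝ) : ℂ) * ((R z : ℝ) : ℂ) * ((1/2 : ℂ)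 * (((fderiv ℝ R z 1 : ℝ) : ℂ) - Complex.I * ((fderiv ℝ R z Complex.I : ℝ) : ℂ) + Complex.I * (((R z : ℝ) : ℂ) * (((fderiv ℝ Θ z 1 : ℝ) : ℂ) - Complex.I * ((fderiv ℝ Θ z Complex.I : ℝ) : ℂ))))) * ((1/2 : ℂ) * (((fderiv ℝ R z 1 : ℝ) : ℂ) + Complex.I * ((fderiv ℝ R z Complex.I : ℝ) : ℂ) + Complex.I * (((R z : ℝ) : ℂ) * (((fderiv ℝ Θ z 1 : ℝ) : ℂ) + Complex.I * ((fderiv ℝ Θ z Complex.I : ℝ) : ℂ))))) = 0 :=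
    (mul_eq_zero.mp h5).resolve_right hE0
  have hab : 4 * ((((((1/2 : ℂ) * (((fderiv ℝ R z 1 : ℝ) : ℂ) - Complex.I * ((fderiv ℝ R z Complex.I : ℝ) : ℂ) + Complex.I * (((R z : ℝ) : ℂ) * (((fderiv ℝ Θ z 1 : ℝ) : ℂ) - Complex.I * ((fderiv ℝ Θ z Complex.I : ℝ) : ℂ))))) * (Complex.I * ((fderiv ℝ Θ z 1 : ℝ) : ℂ)) + ((1/2 : ℂ) * (((fderiv ℝ (fun ζ => fderiv ℝ R ζ 1) z 1 : ℝ) : ℂ) - Complex.I * ((fderiv ℝ (fun ζ => fderiv ℝ R ζ Complex.I) z 1 : ℝ) : ℂ) + Complex.I * (((R z : ℝ) : ℂ) * (((fderiv ℝ (fun ζ => fderiv ℝ Θ ζ 1) z 1 : ℝ) : ℂ) - Complex.I * ((fderiv ℝ (fun ζ => fderiv ℝ Θ ζ Complex.I) z 1 : ℝ) : ℂ)) + (((fderiv ℝ Θ z 1 : ℝ) : ℂ) - Complex.I * ((fderiv ℝ Θ z Complex.I : ℝ) : ℂ)) * ((fderiv ℝ R z 1 : ℝ) : ℂ))))) + Complex.I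 * (((1/2 : ℂ) * (((fderiv ℝ R z 1 : ℝ) : ℂ) - Complex.I * ((fderiv ℝ R z Complex.I : ℝ) : ℂ) + Complex.I * (((R z : ℝ) : ℂ) * (((fderiv ℝ Θ z 1 : ℝ) : ℂ) - Complex.I * ((fderiv ℝ Θ z Complex.I : ℝ) : ℂ))))) * (Complex.I * ((fderiv ℝ Θ z Complex.I : ℝ) : ℂ)) + ((1/2 : ℂ) * (((fderiv ℝ (fun ζ => fderiv ℝ R ζ 1) z Complex.I : ℝ) : ℂ) - Complex.I * ((fderiv ℝ (fun ζ => fderiv ℝ R ζ Complex.I) z Complex.I : ℝ) : ℂ) + Complex.I * (((R z : ℝ) : ℂ) * (((fderiv ℝ (fun ζ => fderiv ℝ Θ ζ 1) z Complex.I : ℝ) : ℂ) - Complex.I * ((fderiv ℝ (fun ζ => fderiv ℝ Θ ζ Complex.I) z Complex.I : ℝ) : ℂ)) + (((fderiv ℝ Θ z 1 : ℝ) : ℂ) - Complex.I * ((fderiv ℝ Θ z Complex.I : ℝ) : ℂ)) * ((fderiv ℝ R z Complex.I : ℝ) : ℂ)))))) / 2) + ((c : ℝ) : ℂ) * ((R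 z : ℝ) : ℂ) * ((1/2 : ℂ) * (((fderiv ℝ R z 1 : ℝ) : ℂ) - Complex.I * ((fderiv ℝ R z Complex.I : ℝ) : ℂ) + Complex.I * (((R z : ℝ) : ℂ) * (((fderiv ℝ Θ z 1 : ℝ) : ℂ) - Complex.I * ((fderiv ℝ Θ z Complex.I : ℝ) : ℂ))))) * ((1/2 : ℂ) * (((fderiv ℝ R z 1 : ℝ) : ℂ) + Complex.I * ((fderiv ℝ R z Complex.I : ℝ) : ℂ) + Complex.I * (((R z : ℝ) : ℂ) * (((fderiv ℝ Θ z 1 : ℝ) : ℂ) + Complex.I * ((fderiv ℝ Θ z Complex.I : ℝ) : ℂ)))))) =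
      (((fderiv ℝ (fun ζ => fderiv ℝ R ζ 1) z 1 + fderiv ℝ (fun ζ => fderiv ℝ R ζ Complex.I) z Complex.I - R z * ((fderiv ℝ Θ z 1)^2 + (fderiv ℝ Θ z Complex.I)^2) + c * R z * ((fderiv ℝ R z 1)^2 + (fderiv ℝ R z Complex.I)^2) - c * (R z)^3 * ((fderiv ℝ Θ z 1)^2 + (fderiv ℝ Θ z Complex.I)^2)) : ℝ) : ℂ) + (((2 * (fderiv ℝ R z 1 * fderiv ℝ Θ z 1 + fderiv ℝ R z Complex.I * fderiv ℝ Θ z Complex.I) + R z * (fderiv ℝ (fun ζ => fderiv ℝ Θ ζ 1) z 1 + fderiv ℝ (fun ζ => fderiv ℝ Θ ζ Complex.I) z Complex.I) + 2 * c * (R z)^2 * (fderiv ℝ R z 1 * fderiv ℝ Θ z 1 + fderiv ℝ R z Complex.I * fderiv ℝ Θ z Complex.I)) : ℝ) : ℂ) * Complex.I := by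
    rw [second_symm R hR z 1 Complex.I, second_symm Θ hΘ z 1 Complex.I]
    push_cast
    linear_combination ((-1 : ℂ) * (R z : ℂ) * (c : ℂ) * (fderiv ℝ R z Complex.I : ℂ)^2 + (-1 : ℂ) * (R z : ℂ) * Complex.I * (fderiv ℝ (fun ζ => fderiv ℝ Θ ζ Complex.I) z Complex.I : ℂ) + (-1 : ℂ) * (R z : ℂ) * Complex.I^2 * (fderiv ℝ Θ z Complex.I : ℂ)^2 + (R z : ℂ) * (fderiv ℝ Θ z 1 : ℂ)^2 + (R z : ℂ) * (fderiv ℝ Θ z Complex.I : ℂ)^2 + (-2 : ℂ) * (R z : ℂ)^2 * (c : ℂ) * Complex.I * (fderiv ℝ R z Complex.I : ℂ) * (fderiv ℝ Θ z Complex.I : ℂ) + (-1 : ℂ) * (R z : ℂ)^3 * (c : ℂ) * Complex.I^2 * (fderiv ℝ Θ z Complex.I : ℂ)^2 + (R z : ℂ)^3 * (c : ℂ) * (fderiv ℝ Θ z 1 : ℂ)^2 + (R z : ℂ)^3 * (c : ℂ) * (fderiv ℝ Θ z Complex.I : ℂ)^2 + (-2 : ℂ) * Complex.I * (fderiv ℝ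 R z Complex.I : ℂ) * (fderiv ℝ Θ z Complex.I : ℂ) + (-1 : ℂ) * (fderiv ℝ (fun ζ => fderiv ℝ R ζ Complex.I) z Complex.I : ℂ)) * Complex.I_sq
  have h7 : (((fderiv ℝ (fun ζ => fderiv ℝ R ζ 1) z 1 + fderiv ℝ (fun ζ => fderiv ℝ R ζ Complex.I) z Complex.I - R z * ((fderiv ℝ Θ z 1)^2 + (fderiv ℝ Θ z Complex.I)^2) + c * R z * ((fderiv ℝ R z 1)^2 + (fderiv ℝ R z Complex.I)^2) - c * (R z)^3 * ((fderiv ℝ Θ z 1)^2 + (fderiv ℝ Θ z Complex.I)^2)) : ℝ) : ℂ) + (((2 * (fderiv ℝ R z 1 * fderiv ℝ Θ z 1 + fderiv ℝ R z Complex.I * fderiv ℝ Θ z Complex.I) + R z * (fderiv ℝ (fun ζ => fderiv ℝ Θ ζ 1) z 1 + fderiv ℝ (fun ζ => fderiv ℝ Θ ζ Complex.I) z Complex.I) + 2 * c * (R z)^2 * (fderiv ℝ R z 1 * fderiv ℝ Θ z 1 + fderiv ℝ R z Complex.I * fderiv ℝ Θ z Complex.I)) : ℝ) : ℂ) * Complex.I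 = 0 := by
    rw [← hab, h6]
    ring
  have ha : ((fderiv ℝ (fun ζ => fderiv ℝ R ζ 1) z 1 + fderiv ℝ (fun ζ => fderiv ℝ R ζ Complex.I) z Complex.I - R z * ((fderiv ℝ Θ z 1)^2 + (fderiv ℝ Θ z Complex.I)^2) + c * R z * ((fderiv ℝ R z 1)^2 + (fderiv ℝ R z Complex.I)^2) - c * (R z)^3 * ((fderiv ℝ Θ z 1)^2 + (fderiv ℝ Θ z Complex.I)^2)) : ℝ) = 0 := by
    have h8 := congrArg Complex.re h7
    simp only [Complex.add_re, Complex.mul_re, Complex.I_re, Complex.I_im, Complex.ofReal_re,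
      Complex.ofReal_im, Complex.zero_re, mul_zero, zero_mul, mul_one, sub_zero, zero_sub,
      add_zero, zero_add, neg_zero] at h8
    linarith [h8]
  unfold lap gradsq
  linear_combination ha


/-- If `w(z) = g(ρ(z)) e^{iΘ(z)}` is harmonic for the radial metric `h(|w|²)|dw|²`,
where `ρ` is the geodesic distance of `w(z)` from `0` and `g` is the inverse of
`s ↦ ∫₀^s h(t²) dt`, then
`Δρ = g(ρ)·h(g(ρ)²)·(1 + 2 (h'(g(ρ)²)/h(g(ρ)²)) g(ρ)²)·|∇Θ|²`. -/
theorem stmt11 (h g : ℝ → ℝ) (w : ℂ → ℂ) (ρ Θ : ℂ → ℝ)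
    (hpos : ∀ t, 0 < h t) (hh : ContDiff ℝ 2 h) (hgc : ContDiff ℝ 2 g)
    (hw : ContDiff ℝ 2 w) (hρc : ContDiff ℝ 2 ρ) (hΘc : ContDiff ℝ 2 Θ)
    (hρdef : ∀ z, ρ z = ∫ t in (0:ℝ)..(‖w z‖), h (t^2))
    (hginv : ∀ s : ℝ, (∫ t in (0:ℝ)..(g s), h (t^2)) = s)
    (hwdef : ∀ z, w z = ((g (ρ z) : ℝ) : ℂ) * Complex.exp (Complex.I * (Θ z : ℝ)))
    (hharm : ∀ z, wdzbar (fun ζ => wdz w ζ) z +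
      (((2 * (deriv h (‖w z‖ ^ 2) / h (‖w z‖ ^ 2)) : ℝ) : ℂ)) *
        (starRingEnd ℂ (w z)) * wdz w z * wdzbar w z = 0) :
    ∀ z, lap ρ z =
      g (ρ z) * h (g (ρ z)^2) *
        (1 + 2 * (deriv h (g (ρ z)^2) / h (g (ρ z)^2)) * g (ρ z)^2) * gradsq Θ z := by
  have hcont : Continuous (fun t : ℝ => h (t^2)) := hh.continuous.comp (continuous_pow 2)
  have hFd : ∀ s : ℝ, HasDerivAt (fun s : ℝ => ∫ t in (0:ℝ)..s, h (t^2)) (h (s^2)) s :=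
    fun s => (hcont.integral_hasStrictDerivAt 0 s).hasDerivAt
  have hFm : StrictMono (fun s : ℝ => ∫ t in (0:ℝ)..s, h (t^2)) :=
    strictMono_of_deriv_pos (fun s => by rw [(hFd s).deriv]; exact hpos _)
  have habs : ∀ ζ, ‖w ζ‖ = g (ρ ζ) :=
    fun ζ => (hFm.injective ((hginv (ρ ζ)).trans (hρdef ζ))).symm
  obtain rfl : w = fun ζ => ((g (ρ ζ) : ℝ) : ℂ) * Complex.exp (Complex.I * ((Θ ζ : ℝ) : ℂ)) :=
    funext hwdef
  intro z
  have hR2 : ContDiff ℝ 2 (fun ζ => g (ρ ζ)) := hgc.comp hρc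
  have hRd : Differentiable ℝ (fun ζ => g (ρ ζ)) := hR2.differentiable two_ne_zero
  have heq := hharm z
  beta_reduce at heq
  rw [habs z] at heq
  have hkey := key (fun ζ => g (ρ ζ)) Θ hR2 hΘc
    (2 * (deriv h ((g (ρ z))^2) / h ((g (ρ z))^2))) z heq
  -- now the laplacian of ρ
  have hρeq : ρ = fun ζ => ∫ t in (0:ℝ)..(g (ρ ζ)), h (t^2) :=
    funext (fun ζ => (hginv (ρ ζ)).symm)
  have hfd1 : ∀ ζ v, fderiv ℝ ρ ζ v =
      h ((g (ρ ζ))^2) * fderiv ℝ (fun ζ => g (ρ ζ)) ζ v := by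
    intro ζ v
    have h1 : HasFDerivAt (fun ζ => ∫ t in (0:ℝ)..(g (ρ ζ)), h (t^2))
        (h ((g (ρ ζ))^2) • fderiv ℝ (fun ζ => g (ρ ζ)) ζ) ζ :=
      by have := (hFd (g (ρ ζ))).comp_hasFDerivAt ζ (hRd ζ).hasFDerivAt; exact this
    conv_lhs => rw [hρeq]
    rw [h1.fderiv]
    simp [smul_eq_mul]
  have hsq : HasFDerivAt (fun ζ => (g (ρ ζ))^2)
      ((2 * g (ρ z)) • fderiv ℝ (fun ζ => g (ρ ζ)) z) z := by
    have h2 : HasFDerivAt (fun ζ => g (ρ ζ) * g (ρ ζ)) _ z := (hRd z).hasFDerivAt.mul (hRd z).hasFDerivAt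
    simpa [pow_two, two_mul, add_smul] using h2
  have hhsq : HasFDerivAt (fun ζ => h ((g (ρ ζ))^2))
      (deriv h ((g (ρ z))^2) • ((2 * g (ρ z)) • fderiv ℝ (fun ζ => g (ρ ζ)) z)) z :=
    (((hh.differentiable two_ne_zero) _).hasDerivAt).comp_hasFDerivAt z hsq
  have hR1d : HasFDerivAt (fun ζ => fderiv ℝ (fun ζ => g (ρ ζ)) ζ 1)
      (fderiv ℝ (fun ζ => fderiv ℝ (fun ζ => g (ρ ζ)) ζ 1) z) z :=
    (((contDiff_one_fderiv_apply _ hR2 1).differentiable one_ne_zero) z).hasFDerivAt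
  have hRId : HasFDerivAt (fun ζ => fderiv ℝ (fun ζ => g (ρ ζ)) ζ Complex.I)
      (fderiv ℝ (fun ζ => fderiv ℝ (fun ζ => g (ρ ζ)) ζ Complex.I) z) z :=
    (((contDiff_one_fderiv_apply _ hR2 Complex.I).differentiable one_ne_zero) z).hasFDerivAt
  have hlap : lap ρ z =
      deriv h ((g (ρ z))^2) * (2 * g (ρ z)) * (fderiv ℝ (fun ζ => g (ρ ζ)) z 1)^2 +
        h ((g (ρ z))^2) * fderiv ℝ (fun ζ => fderiv ℝ (fun ζ => g (ρ ζ)) ζ 1) z 1 +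
      (deriv h ((g (ρ z))^2) * (2 * g (ρ z)) * (fderiv ℝ (fun ζ => g (ρ ζ)) z Complex.I)^2 +
        h ((g (ρ z))^2) *
          fderiv ℝ (fun ζ => fderiv ℝ (fun ζ => g (ρ ζ)) ζ Complex.I) z Complex.I) := by
    unfold lap
    have e1 : (fun ζ => fderiv ℝ ρ ζ 1) =
        (fun ζ => h ((g (ρ ζ))^2) * fderiv ℝ (fun ζ => g (ρ ζ)) ζ 1) :=
      funext (fun ζ => hfd1 ζ 1)
    have e2 : (fun ζ => fderiv ℝ ρ ζ Complex.I) =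
        (fun ζ => h ((g (ρ ζ))^2) * fderiv ℝ (fun ζ => g (ρ ζ)) ζ Complex.I) :=
      funext (fun ζ => hfd1 ζ Complex.I)
    rw [e1, e2, (HasFDerivAt.fderiv (f := fun ζ => h ((g (ρ ζ))^2) * fderiv ℝ (fun ζ => g (ρ ζ)) ζ 1) (hhsq.mul hR1d)), (HasFDerivAt.fderiv (f := fun ζ => h ((g (ρ ζ))^2) * fderiv ℝ (fun ζ => g (ρ ζ)) ζ Complex.I) (hhsq.mul hRId))]
    simp [ContinuousLinearMap.add_apply, ContinuousLinearMap.smul_apply, smul_eq_mul]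
    ring
  have hne : h (g (ρ z)^2) ≠ 0 := ne_of_gt (hpos _)
  have hc : 2 * (deriv h (g (ρ z)^2) / h (g (ρ z)^2)) * h (g (ρ z)^2) =
      2 * deriv h (g (ρ z)^2) := by
    field_simp
  rw [hlap]
  unfold lap gradsq at hkey
  unfold gradsq
  linear_combination (h (g (ρ z)^2)) * hkey +
    (-(g (ρ z)) * ((fderiv ℝ (fun ζ => g (ρ ζ)) z 1)^2 +
        (fderiv ℝ (fun ζ => g (ρ ζ)) z Complex.I)^2)) * hc
end

section
/- Let y : ℝ → (0,1) be a C² solution of y'' - y = (2y/(y²-1))(y'² - y²). Then along any solution the quantity (y'² - y²)/(1-y²)² is constant; equivalently y satisfies y'² = y² + c(1-y²)² for some constant c. -/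
/-- First integral of the radial hyperbolic-harmonic ODE: if `y : ℝ → (0,1)` is C² and
solves `y'' - y = (2y/(y²-1))(y'² - y²)`, then `(y'² - y²)/(1-y²)²` is constant;
equivalently `y'² = y² + c(1-y²)²` for some constant `c`. -/
theorem stmt18 (y : ℝ → ℝ) (hy : ContDiff ℝ 2 y)
    (h01 : ∀ x, 0 < y x ∧ y x < 1)
    (hode : ∀ x, deriv (deriv y) x - y x =
      (2 * y x / (y x ^ 2 - 1)) * ((deriv y x)^2 - y x ^ 2)) :
    (∃ C : ℝ, ∀ x, ((deriv y x)^2 - y x ^ 2) / (1 - y x ^ 2)^2 = C) ∧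
    (∃ c : ℝ, ∀ x, (deriv y x)^2 = y x ^ 2 + c * (1 - y x ^ 2)^2) := by
  have hy1 : ContDiff ℝ 1 (deriv y) := by
    have := (contDiff_succ_iff_deriv (n := 1)).mp (by exact_mod_cast hy)
    exact this.2.2
  have hdy : Differentiable ℝ y := hy.differentiable (by norm_num)
  have hddy : Differentiable ℝ (deriv y) := hy1.differentiable (by norm_num)
  have hne : ∀ x, (1 - y x ^ 2)^2 ≠ 0 := by
    intro x
    have h1 := (h01 x).1; have h2 := (h01 x).2
    have : (1:ℝ) - y x ^ 2 ≠ 0 := by nlinarith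
    exact pow_ne_zero 2 this
  set F : ℝ → ℝ := fun x => ((deriv y x)^2 - y x ^ 2) / (1 - y x ^ 2)^2 with hF
  have hder : ∀ x, HasDerivAt F 0 x := by
    intro x
    have hy' : HasDerivAt y (deriv y x) x := (hdy x).hasDerivAt
    have hy'' : HasDerivAt (deriv y) (deriv (deriv y) x) x := (hddy x).hasDerivAt
    have hnum : HasDerivAt (fun x => (deriv y x)^2 - y x ^ 2)
        (2 * deriv y x * deriv (deriv y) x - 2 * y x * deriv y x) x := by
      have h1 := (hy''.fun_pow 2)
      have h2 := (hy'.fun_pow 2)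
      simpa [mul_comm, mul_assoc, mul_left_comm] using h1.fun_sub h2
    have hden : HasDerivAt (fun x => (1 - y x ^ 2)^2)
        (2 * (1 - y x ^ 2) * (-(2 * y x * deriv y x))) x := by
      have h2 : HasDerivAt (fun x => 1 - y x ^ 2) (-(2 * y x * deriv y x)) x := by
        simpa [mul_comm, mul_assoc, mul_left_comm] using (hasDerivAt_const x (1:ℝ)).fun_sub (hy'.fun_pow 2)
      simpa [mul_comm, mul_assoc, mul_left_comm] using h2.fun_pow 2
    have h := hnum.fun_div hden (hne x)
    refine h.congr_deriv ?_
    have hode' := hode x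
    have h1m : (1 : ℝ) - y x ^ 2 ≠ 0 := by
      have h1 := (h01 x).1; have h2 := (h01 x).2
      nlinarith
    have hdd : deriv (deriv y) x = y x + (2 * y x / (y x ^ 2 - 1)) * ((deriv y x)^2 - y x ^ 2) := by
      linarith
    rw [hdd]
    have hne2 : y x ^ 2 - 1 ≠ 0 := by intro h; apply h1m; linarith
    field_simp
    ring
  have hdiff : Differentiable ℝ F := fun x => (hder x).differentiableAt
  have hconst : ∀ x, F x = F 0 := by
    intro x
    have : ∀ z, deriv F z = 0 := fun z => (hder z).deriv
    exact is_const_of_deriv_eq_zero hdiff this x 0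
  constructor
  · exact ⟨F 0, hconst⟩
  · refine ⟨F 0, fun x => ?_⟩
    have h : (deriv y x ^ 2 - y x ^ 2) / (1 - y x ^ 2)^2 = F 0 := hconst x
    rw [div_eq_iff (hne x)] at h
    linarith
end
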